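/- Let p be a prime, let r be an integer with 1 ≤ r ≤ p − 1, let A ⊆ ZMod p be an r-arithmetic set, let ι be a finite type, and let v : ι → (Fin n → ZMod p) be an (r, F_p)-irredundant family. Then for every x in the F_p-linear span of {v i : i ∈ ι} there exists a : ι → ZMod p with a i ∈ A for every i ∈ ι and x = Σ_{i ∈ ι} (a i) • (v i). -/

import Mathlib

/-- The family `v` is `(r, F_p)`-vanishing: `∏ i, (1 - g^{v i})^r = 0` in the
group ring `F_p[F_p^n]`. -/
def FpVanishing (p n r : ℕ) {ι : Type} [Fintype ι] (v : ι → (Fin n → ZMod p)) : Prop :=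
  ∏ i : ι, ((1 : AddMonoidAlgebra (ZMod p) (Fin n → ZMod p)) -
    AddMonoidAlgebra.single (v i) 1) ^ r = 0

/-- The family `v` is `(r, F_p)`-irredundant: it is `(r, F_p)`-vanishing, but the
corresponding product over any proper subset of the index set is nonzero. -/
def FpIrredundant (p n r : ℕ) {ι : Type} [Fintype ι] (v : ι → (Fin n → ZMod p)) : Prop :=
  FpVanishing p n r v ∧
    ∀ S : Finset ι, S ≠ Finset.univ →
      ∏ i ∈ S, ((1 : AddMonoidAlgebra (ZMod p) (Fin n → ZMod p)) -
        AddMonoidAlgebra.single (v i) 1) ^ r ≠ 0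

/-- `A ⊆ ZMod p` is `r`-arithmetic. -/
def IsArithSet (p : ℕ) (r : ℕ) (A : Set (ZMod p)) : Prop :=
  (∀ a ∈ A, ∃ b : ZMod p, b ≠ 0 ∧ ∀ i : ℤ, -(r : ℤ) ≤ i → i ≤ (r : ℤ) → a + i • b ∈ A) ∧
  (∀ a : ZMod p, a ∉ A → ∃ b ∈ A, ∀ i : ℤ, 1 ≤ i → i ≤ (r : ℤ) → a + i • b ∈ A)

open Finset AddMonoidAlgebra

section Aux

variable {p n : ℕ} [hpf : Fact p.Prime]

local notation "G" => (Fin n → ZMod p)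
local notation "Rg" => AddMonoidAlgebra (ZMod p) (Fin n → ZMod p)

private lemma charP_R : CharP (AddMonoidAlgebra (ZMod p) (Fin n → ZMod p)) p := by
  refine charP_of_injective_algebraMap (R := ZMod p)
    (A := AddMonoidAlgebra (ZMod p) (Fin n → ZMod p)) ?_ p
  rw [AddMonoidAlgebra.coe_algebraMap]
  intro x y hxy
  exact AddMonoidAlgebra.single_right_injective hxy

private lemma psmul_zero_G (u : G) : p • u = 0 := by
  have : (p : ℕ) • u = ((p : ZMod p)) • u := (Nat.cast_smul_eq_nsmul (ZMod p) p u).symm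
  rw [this, ZMod.natCast_self, zero_smul]

private lemma nil_one_sub_single (u : G) :
    (1 - single u (1 : ZMod p)) ^ p = 0 := by
  haveI := charP_R (p := p) (n := n)
  rw [sub_pow_char, one_pow, AddMonoidAlgebra.single_pow, one_pow, psmul_zero_G,
    ← AddMonoidAlgebra.one_def, sub_self]

private lemma isUnit_geom (u : G) (m : ℕ) (hm : (m : ZMod p) ≠ 0) :
    IsUnit (∑ t ∈ range m, (single u (1 : ZMod p)) ^ t) := by
  have h1 : (∑ t ∈ range m, (single u (1 : ZMod p)) ^ t) =
      (m : Rg) + ∑ t ∈ range m, ((single u (1 : ZMod p)) ^ t - 1) := by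
    rw [Finset.sum_sub_distrib, Finset.sum_const, card_range, nsmul_eq_mul, mul_one]
    ring
  rw [h1]
  refine IsNilpotent.isUnit_add_left_of_commute ?_ ?_ (Commute.all _ _)
  · apply isNilpotent_sum
    intro t _
    have h2 : (single u (1 : ZMod p)) ^ t - 1 = -(1 - single (t • u) (1 : ZMod p)) := by
      rw [AddMonoidAlgebra.single_pow, one_pow]; ring
    rw [h2]
    exact IsNilpotent.neg ⟨p, nil_one_sub_single _⟩
  · have h3 : ((m : ℕ) : Rg) = algebraMap (ZMod p) Rg ((m : ZMod p)) := by
      rw [map_natCast]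
    rw [h3]
    exact (IsUnit.mk0 _ hm).map _

private lemma scale_unit (u : G) (lam : ZMod p) (hlam : lam ≠ 0) :
    ∃ N : Rg, IsUnit N ∧
      (1 - single (lam • u) (1 : ZMod p)) = (1 - single u (1 : ZMod p)) * N := by
  set m := lam.val with hm
  have hcast : ((m : ℕ) : ZMod p) = lam := ZMod.natCast_rightInverse lam
  have hm0 : ((m : ℕ) : ZMod p) ≠ 0 := by rw [hcast]; exact hlam
  refine ⟨∑ t ∈ range m, (single u (1 : ZMod p)) ^ t, isUnit_geom u m hm0, ?_⟩
  have hpow : (single u (1 : ZMod p)) ^ m = single (lam • u) (1 : ZMod p) := by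
    rw [AddMonoidAlgebra.single_pow, one_pow]
    congr 1
    rw [← Nat.cast_smul_eq_nsmul (ZMod p), hcast]
  have := mul_geom_sum (single u (1 : ZMod p)) m
  rw [hpow] at this
  have h2 : (1 - single u (1:ZMod p)) * ∑ t ∈ range m, (single u (1:ZMod p)) ^ t
      = -((single u (1:ZMod p) - 1) * ∑ t ∈ range m, (single u (1:ZMod p)) ^ t) := by ring
  rw [h2, this]
  ring

private lemma transfer_zero {ι : Type} (vv ww : ι → G) (lam : ι → ZMod p)
    (hl : ∀ i, lam i ≠ 0) (hw : ∀ i, ww i = lam i • vv i) (r : ℕ) (S : Finset ι) :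
    (∏ i ∈ S, (1 - single (ww i) (1 : ZMod p)) ^ r = 0) ↔
      (∏ i ∈ S, (1 - single (vv i) (1 : ZMod p)) ^ r = 0) := by
  choose N hNu hNe using fun i => scale_unit (vv i) (lam i) (hl i)
  have key : ∏ i ∈ S, (1 - single (ww i) (1 : ZMod p)) ^ r =
      (∏ i ∈ S, (1 - single (vv i) (1 : ZMod p)) ^ r) * ∏ i ∈ S, (N i) ^ r := by
    rw [← Finset.prod_mul_distrib]
    refine Finset.prod_congr rfl fun i _ => ?_
    rw [hw i, hNe i, mul_pow]
  have hu : IsUnit (∏ i ∈ S, (N i) ^ r) :=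
    Finset.prod_induction _ IsUnit (fun _ _ => IsUnit.mul) isUnit_one
      (fun i _ => (hNu i).pow r)
  rw [key, IsUnit.mul_left_eq_zero hu]

private lemma supp_pow (u : G) (r : ℕ) :
    ∀ z ∈ ((1 - single u (1 : ZMod p)) ^ r).coeff.support, ∃ k ≤ r, z = k • u := by
  classical
  induction r with
  | zero =>
    intro z hz
    rw [pow_zero, AddMonoidAlgebra.one_def, AddMonoidAlgebra.coeff_single] at hz
    have := Finsupp.support_single_subset hz
    simp only [Finset.mem_singleton] at this
    exact ⟨0, le_refl 0, by simp [this]⟩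
  | succ r ih =>
    intro z hz
    rw [pow_succ] at hz
    have hmem := AddMonoidAlgebra.support_coeff_mul_subset _ _ hz
    rw [Finset.mem_add] at hmem
    obtain ⟨z₁, hz₁, z₂, hz₂, rfl⟩ := hmem
    obtain ⟨k, hk, rfl⟩ := ih z₁ hz₁
    have h2 : z₂ = 0 ∨ z₂ = u := by
      rw [show (1 - single u (1 : ZMod p)) = single 0 1 - single u 1 by
        rw [AddMonoidAlgebra.one_def]] at hz₂
      rw [AddMonoidAlgebra.coeff_sub, AddMonoidAlgebra.coeff_single,
        AddMonoidAlgebra.coeff_single] at hz₂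
      have := Finsupp.support_sub hz₂
      rw [Finset.mem_union] at this
      rcases this with h | h
      · exact Or.inl (by simpa using Finsupp.support_single_subset h)
      · exact Or.inr (by simpa using Finsupp.support_single_subset h)
    rcases h2 with rfl | rfl
    · exact ⟨k, by omega, by simp⟩
    · exact ⟨k + 1, by omega, by rw [succ_nsmul]⟩

private lemma supp_prod {ι : Type} [DecidableEq ι] (u : ι → G) (r : ℕ) (S : Finset ι) :
    ∀ z ∈ (∏ i ∈ S, (1 - single (u i) (1 : ZMod p)) ^ r).coeff.support,
      ∃ c : ι → ℕ, (∀ i, c i ≤ r) ∧ (∀ i ∉ S, c i = 0) ∧ z = ∑ i ∈ S, c i • u i := by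
  classical
  induction S using Finset.induction with
  | empty =>
    intro z hz
    rw [Finset.prod_empty, AddMonoidAlgebra.one_def, AddMonoidAlgebra.coeff_single] at hz
    have := Finsupp.support_single_subset hz
    simp only [Finset.mem_singleton] at this
    exact ⟨fun _ => 0, fun _ => Nat.zero_le _, fun _ _ => rfl, by simp [this]⟩
  | @insert j T hj ih =>
    intro z hz
    rw [Finset.prod_insert hj] at hz
    have hmem := AddMonoidAlgebra.support_coeff_mul_subset _ _ hz
    rw [Finset.mem_add] at hmem
    obtain ⟨z₁, hz₁, z₂, hz₂, rfl⟩ := hmem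
    obtain ⟨k, hk, rfl⟩ := supp_pow (u j) r z₁ hz₁
    obtain ⟨c, hc1, hc2, rfl⟩ := ih z₂ hz₂
    refine ⟨Function.update c j k, ?_, ?_, ?_⟩
    · intro i
      rcases eq_or_ne i j with rfl | hij
      · simpa using hk
      · simpa [Function.update_of_ne hij] using hc1 i
    · intro i hi
      have hij : i ≠ j := fun h => hi (h ▸ Finset.mem_insert_self j T)
      rw [Function.update_of_ne hij]
      exact hc2 i fun h => hi (Finset.mem_insert_of_mem h)
    · rw [Finset.sum_insert hj, Function.update_self]
      congr 1
      refine Finset.sum_congr rfl fun i hi => ?_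
      have hij : i ≠ j := fun h => hj (h ▸ hi)
      rw [Function.update_of_ne hij]

private lemma coeff_eq (u : G) (r : ℕ) (Q : Rg) (z : G) :
    (((1 - single u (1 : ZMod p)) ^ r * Q)).coeff z =
      ∑ m ∈ range (r + 1),
        ((-1 : ZMod p) ^ (m + r) * (r.choose m : ZMod p)) * Q.coeff (z - (r - m) • u) := by
  rw [sub_pow, Finset.sum_mul, AddMonoidAlgebra.coeff_sum, Finsupp.finset_sum_apply]
  refine Finset.sum_congr rfl fun m _ => ?_
  have h1 : ((-1 : Rg) ^ (m + r) * (1 : Rg) ^ m * (single u (1 : ZMod p)) ^ (r - m) *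
      ((r.choose m : ℕ) : Rg)) * Q =
      algebraMap (ZMod p) Rg ((-1 : ZMod p) ^ (m + r) * (r.choose m : ZMod p)) *
        (single ((r - m) • u) (1 : ZMod p) * Q) := by
    rw [AddMonoidAlgebra.single_pow, one_pow, one_pow, map_mul, map_pow, map_neg, map_one,
      map_natCast]
    ring
  rw [h1]
  have h2 : algebraMap (ZMod p) Rg ((-1 : ZMod p) ^ (m + r) * (r.choose m : ZMod p)) =
      single (0 : G) ((-1 : ZMod p) ^ (m + r) * (r.choose m : ZMod p)) := by
    rw [AddMonoidAlgebra.coe_algebraMap]; rfl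
  rw [h2, AddMonoidAlgebra.coeff_single_mul_apply, AddMonoidAlgebra.coeff_single_mul_apply,
    neg_zero, zero_add, one_mul, neg_add_eq_sub]

private lemma exists_shift (u : G) (r : ℕ) (Q : Rg)
    (hQ0 : (1 - single u (1 : ZMod p)) ^ r * Q = 0) (z : G) (hz : Q.coeff z ≠ 0) :
    ∃ k : ℕ, 1 ≤ k ∧ k ≤ r ∧ Q.coeff (z - k • u) ≠ 0 := by
  by_contra h
  push_neg at h
  have hc := coeff_eq u r Q z
  rw [hQ0, AddMonoidAlgebra.coeff_zero, Finsupp.zero_apply] at hc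
  rw [Finset.sum_range_succ] at hc
  have hlast : ((-1 : ZMod p) ^ (r + r) * (r.choose r : ZMod p)) * Q.coeff (z - (r - r) • u) = Q.coeff z := by
    have hneg : (-1 : ZMod p) ^ (r + r) = 1 := by
      rw [pow_add, ← mul_pow]; norm_num
    rw [hneg, Nat.choose_self, Nat.sub_self, zero_smul, sub_zero]
    norm_num
  have hzero : ∀ m ∈ range r,
      ((-1 : ZMod p) ^ (m + r) * (r.choose m : ZMod p)) * Q.coeff (z - (r - m) • u) = 0 := by
    intro m hm
    rw [Finset.mem_range] at hm
    rw [h (r - m) (by omega) (by omega), mul_zero]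
  rw [Finset.sum_eq_zero hzero, zero_add, hlast] at hc
  exact hz hc.symm

private lemma key_step {ι : Type} [Fintype ι] [DecidableEq ι] (w : ι → G) (r : ℕ)
    (hvan : ∏ i : ι, (1 - single (w i) (1 : ZMod p)) ^ r = 0) (j : ι)
    (hQ : ∏ i ∈ univ.erase j, (1 - single (w i) (1 : ZMod p)) ^ r ≠ 0) :
    ∃ (k : ℕ) (c c' : ι → ℕ), 1 ≤ k ∧ k ≤ r ∧ (∀ i, c i ≤ r) ∧ (∀ i, c' i ≤ r) ∧
      k • w j + ∑ i ∈ univ.erase j, c' i • w i = ∑ i ∈ univ.erase j, c i • w i := by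
  have hfac : (1 - single (w j) (1 : ZMod p)) ^ r *
      ∏ i ∈ univ.erase j, (1 - single (w i) (1 : ZMod p)) ^ r = 0 := by
    rw [← Finset.mul_prod_erase univ
      (fun i => (1 - single (w i) (1 : ZMod p)) ^ r) (mem_univ j)] at hvan
    exact hvan
  set Q := ∏ i ∈ univ.erase j, (1 - single (w i) (1 : ZMod p)) ^ r with hQdef
  obtain ⟨z₀, hz₀⟩ := Finsupp.support_nonempty_iff.mpr (mt AddMonoidAlgebra.coeff_eq_zero.mp hQ)
  have hz₀' : Q.coeff z₀ ≠ 0 := Finsupp.mem_support_iff.mp hz₀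
  obtain ⟨k, hk1, hk2, hzk⟩ := exists_shift (w j) r Q hfac z₀ hz₀'
  obtain ⟨c, hc1, _, hc3⟩ := supp_prod w r (univ.erase j) z₀ hz₀
  obtain ⟨c', hc'1, _, hc'3⟩ := supp_prod w r (univ.erase j) (z₀ - k • w j)
    (Finsupp.mem_support_iff.mpr hzk)
  refine ⟨k, c, c', hk1, hk2, hc1, hc'1, ?_⟩
  have : z₀ - k • w j = ∑ i ∈ univ.erase j, c' i • w i := hc'3
  rw [sub_eq_iff_eq_add] at this
  rw [← hc3, this]
  abel

end Aux

theorem stmt_11 (p : ℕ) (hp : p.Prime) (n : ℕ) (r : ℕ) (hr1 : 1 ≤ r) (hrp : r ≤ p - 1)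
    (A : Set (ZMod p)) (hA : IsArithSet p r A)
    (ι : Type) [Fintype ι] (v : ι → (Fin n → ZMod p)) (hv : FpIrredundant p n r v)
    (x : Fin n → ZMod p) (hx : x ∈ Submodule.span (ZMod p) (Set.range v)) :
    ∃ a : ι → ZMod p, (∀ i, a i ∈ A) ∧ x = ∑ i : ι, a i • v i := by
  haveI := Fact.mk hp
  classical
  obtain ⟨a₀, ha₀⟩ := (Submodule.mem_span_range_iff_exists_fun (ZMod p)).1 hx
  suffices H : ∀ (N : ℕ) (a : ι → ZMod p),
      (univ.filter (fun i => a i ∉ A)).card ≤ N → (∑ i : ι, a i • v i = x) →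
      ∃ a' : ι → ZMod p, (∀ i, a' i ∈ A) ∧ x = ∑ i : ι, a' i • v i by
    exact H _ a₀ le_rfl ha₀
  intro N
  induction N with
  | zero =>
    intro a hcard hsum
    refine ⟨a, fun i => ?_, hsum.symm⟩
    by_contra hbad
    have hmem : i ∈ univ.filter (fun i => a i ∉ A) := mem_filter.mpr ⟨mem_univ i, hbad⟩
    rw [Finset.card_eq_zero.mp (Nat.le_zero.mp hcard)] at hmem
    exact absurd hmem (Finset.notMem_empty i)
  | succ N ih =>
    intro a hcard hsum
    by_cases hall : ∀ i, a i ∈ A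
    · exact ⟨a, hall, hsum.symm⟩
    push_neg at hall
    obtain ⟨j, hj⟩ := hall
    obtain ⟨b, hbA, hbspec⟩ := hA.2 (a j) hj
    have hb0 : b ≠ 0 := by
      intro h0
      apply hj
      have := hbspec 1 le_rfl (by exact_mod_cast hr1)
      simpa [h0] using this
    set lam : ι → ZMod p := fun i =>
      if h : a i ∈ A then (hA.1 (a i) h).choose else if i = j then b else 1 with hlamdef
    have hlamA : ∀ i (h : a i ∈ A), lam i ≠ 0 ∧
        ∀ d : ℤ, -(r : ℤ) ≤ d → d ≤ (r : ℤ) → a i + d • lam i ∈ A := by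
      intro i h
      simp only [hlamdef, dif_pos h]
      exact (hA.1 (a i) h).choose_spec
    have hlamj : lam j = b := by simp [hlamdef, dif_neg hj]
    have hlam0 : ∀ i, lam i ≠ 0 := by
      intro i
      by_cases h : a i ∈ A
      · exact (hlamA i h).1
      · simp only [hlamdef, dif_neg h]
        by_cases hij : i = j
        · simpa [hij] using hb0
        · simp [hij]
    set w : ι → (Fin n → ZMod p) := fun i => lam i • v i with hwdef
    have hvanw : ∏ i : ι, (1 - single (w i) (1 : ZMod p)) ^ r = 0 :=
      (transfer_zero v w lam hlam0 (fun i => rfl) r univ).mpr hv.1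
    have hQw : ∏ i ∈ univ.erase j, (1 - single (w i) (1 : ZMod p)) ^ r ≠ 0 := by
      intro h0
      exact hv.2 (univ.erase j)
        (fun h => (Finset.notMem_erase j univ) (h.symm ▸ mem_univ j))
        ((transfer_zero v w lam hlam0 (fun i => rfl) r (univ.erase j)).mp h0)
    obtain ⟨k, c, c', hk1, hk2, hc, hc', hrel⟩ := key_step w r hvanw j hQw
    set d : ι → ℤ := fun i => (c i : ℤ) - (c' i : ℤ) with hddef
    set a' : ι → ZMod p := fun i =>
      if i = j then a j + (k : ℤ) • b else a i - ((d i : ℤ) : ZMod p) * lam i with ha'def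
    have ha'j : a' j ∈ A := by
      simp only [ha'def, if_pos rfl]
      exact hbspec k (by exact_mod_cast hk1) (by exact_mod_cast hk2)
    have hgood : ∀ i, i ≠ j → a i ∈ A → a' i ∈ A := by
      intro i hij hAi
      have hci := hc i
      have hc'i := hc' i
      have := (hlamA i hAi).2 (-(d i))
        (by simp only [hddef]; push_cast; omega)
        (by simp only [hddef]; push_cast; omega)
      simp only [ha'def, if_neg hij]
      rw [sub_eq_add_neg, ← neg_mul, ← Int.cast_neg, ← zsmul_eq_mul]
      exact this
    -- the sum identity
    have e2 : ((k : ℤ) • b) • v j = k • w j := by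
      rw [zsmul_eq_mul, hwdef]
      show (((k : ℤ) : ZMod p) * b) • v j = k • (lam j • v j)
      rw [hlamj, mul_smul, Int.cast_natCast, Nat.cast_smul_eq_nsmul]
    have e1 : ∀ i, (((d i : ℤ) : ZMod p) * lam i) • v i = c i • w i - c' i • w i := by
      intro i
      have : ((d i : ℤ) : ZMod p) = ((c i : ℕ) : ZMod p) - ((c' i : ℕ) : ZMod p) := by
        simp only [hddef]; push_cast; ring
      rw [this, sub_mul, sub_smul, mul_smul, mul_smul, Nat.cast_smul_eq_nsmul,
        Nat.cast_smul_eq_nsmul]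
    have hsum' : ∑ i : ι, a' i • v i = x := by
      rw [← hsum]
      rw [← Finset.add_sum_erase _ (fun i => a' i • v i) (mem_univ j),
        ← Finset.add_sum_erase _ (fun i => a i • v i) (mem_univ j)]
      have hj' : a' j • v j = a j • v j + k • w j := by
        simp only [ha'def, if_pos rfl]
        rw [add_smul, e2]
      have hi' : ∀ i ∈ univ.erase j, a' i • v i = a i • v i - (c i • w i - c' i • w i) := by
        intro i hi
        have hij : i ≠ j := Finset.ne_of_mem_erase hi
        simp only [ha'def, if_neg hij]
        rw [sub_smul, e1]
      rw [hj', Finset.sum_congr rfl hi']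
      rw [Finset.sum_sub_distrib, Finset.sum_sub_distrib]
      have hkw : (∑ i ∈ univ.erase j, c i • w i) - (∑ i ∈ univ.erase j, c' i • w i)
          = k • w j := by rw [← hrel]; abel
      rw [hkw]
      abel
    have hsub : univ.filter (fun i => a' i ∉ A) ⊆ (univ.filter (fun i => a i ∉ A)).erase j := by
      intro i hi
      rw [mem_filter] at hi
      have hij : i ≠ j := by
        intro h; exact hi.2 (h ▸ ha'j)
      refine Finset.mem_erase.mpr ⟨hij, mem_filter.mpr ⟨mem_univ i, ?_⟩⟩
      intro hAi
      exact hi.2 (hgood i hij hAi)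
    have hjmem : j ∈ univ.filter (fun i => a i ∉ A) := mem_filter.mpr ⟨mem_univ j, hj⟩
    have hcard' : (univ.filter (fun i => a' i ∉ A)).card ≤ N := by
      have h1 := Finset.card_le_card hsub
      rw [Finset.card_erase_of_mem hjmem] at h1
      have h2 : 1 ≤ (univ.filter (fun i => a i ∉ A)).card := Finset.card_pos.mpr ⟨j, hjmem⟩
      omega
    exact ih a' hcard' hsum'
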